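/- arXiv:1807.01794 — 2 statements merged into one kernel-verified Lean document; each statement's English description precedes it below -/
import Mathlib

section
/- For all integers k, l ≥ 1 with k + l + 1 ≤ n, the expectation of X(k,l) under G(n,1/2) equals E X(k,l) = (n! / (k! · l! · (n−k−l)!)) · (n−k−l) · 2^{−(k+l)²/2 + (k+l)/2} · 2^{−(k+l)} · (1 − 2^{−k})^{n−k−l−1} · (1 − 2^{−l})^{n−k−l−1}. -/
open Filter Real

/-- A "configuration" in a graph `G`: two disjoint nonempty cliques `X₁, X₂` with no
edges between them, together with a vertex `x` outside both that is adjacent to every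
vertex of `X₁ ∪ X₂`, such that every vertex outside `X₁ ∪ X₂` has a neighbor in `X₁`
and a neighbor in `X₂`. -/
def IsConfig {n : ℕ} (G : SimpleGraph (Fin n)) (X₁ X₂ : Finset (Fin n)) (x : Fin n) : Prop :=
  X₁.Nonempty ∧ X₂.Nonempty ∧ Disjoint X₁ X₂ ∧
  x ∉ X₁ ∧ x ∉ X₂ ∧
  (∀ u ∈ X₁, ∀ v ∈ X₁, u ≠ v → G.Adj u v) ∧
  (∀ u ∈ X₂, ∀ v ∈ X₂, u ≠ v → G.Adj u v) ∧
  (∀ u ∈ X₁, ∀ v ∈ X₂, ¬ G.Adj u v) ∧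
  (∀ u ∈ X₁, G.Adj x u) ∧ (∀ u ∈ X₂, G.Adj x u) ∧
  (∀ y : Fin n, y ∉ X₁ → y ∉ X₂ →
    (∃ u ∈ X₁, G.Adj y u) ∧ (∃ u ∈ X₂, G.Adj y u))

/-- Property `P` of a graph: existence of a configuration. -/
def PropertyP {n : ℕ} (G : SimpleGraph (Fin n)) : Prop :=
  ∃ (X₁ X₂ : Finset (Fin n)) (x : Fin n), IsConfig G X₁ X₂ x

/-- The probability, under the uniform distribution on graphs on `{1, …, n}`,
of the set of graphs satisfying `Q`. -/
noncomputable def unifProb (n : ℕ) (Q : SimpleGraph (Fin n) → Prop) : ℝ :=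
  (Nat.card {G : SimpleGraph (Fin n) // Q G} : ℝ) / 2 ^ (n.choose 2)

/-- `Xcount n k l G` is the number of ordered triples `(X₁, X₂, x)` forming a
configuration in `G` with `|X₁| = k` and `|X₂| = l`. -/
noncomputable def Xcount (n k l : ℕ) (G : SimpleGraph (Fin n)) : ℕ :=
  Nat.card {t : Finset (Fin n) × Finset (Fin n) × Fin n //
    t.1.card = k ∧ t.2.1.card = l ∧ IsConfig G t.1 t.2.1 t.2.2}

/-- The expectation of a random variable `Y` under the uniform distribution on graphs
on `{1, …, n}`. -/
noncomputable def expect (n : ℕ) (Y : SimpleGraph (Fin n) → ℝ) : ℝ :=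
  (∑ G : SimpleGraph (Fin n), Y G) / 2 ^ (n.choose 2)

namespace ConfigProof
open Finset

/-- Simple graphs correspond to predicates on non-diagonal unordered pairs. -/
noncomputable def graphEquiv (n : ℕ) :
    SimpleGraph (Fin n) ≃ ({e : Sym2 (Fin n) // ¬ e.IsDiag} → Prop) where
  toFun G e := e.1 ∈ G.edgeSet
  invFun f := SimpleGraph.fromEdgeSet {e | ∃ h : ¬ e.IsDiag, f ⟨e, h⟩}
  left_inv G := by
    ext a b
    simp only [SimpleGraph.fromEdgeSet_adj, Set.mem_setOf_eq, SimpleGraph.mem_edgeSet]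
    constructor
    · rintro ⟨⟨h, hadj⟩, hne⟩; exact hadj
    · intro h; exact ⟨⟨by simp [Sym2.mk_isDiag_iff, h.ne], h⟩, h.ne⟩
  right_inv f := by
    funext e
    obtain ⟨e, he⟩ := e
    show (e ∈ (SimpleGraph.fromEdgeSet _).edgeSet) = f ⟨e, he⟩
    rw [SimpleGraph.edgeSet_fromEdgeSet]
    apply propext
    constructor
    · rintro ⟨⟨h, hf⟩, -⟩; exact hf
    · intro hf; exact ⟨⟨he, hf⟩, he⟩

lemma graphEquiv_apply_mk {n : ℕ} (G : SimpleGraph (Fin n)) {a b : Fin n} (h : ¬ (s(a,b) : Sym2 (Fin n)).IsDiag) :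
    graphEquiv n G ⟨s(a,b), h⟩ = G.Adj a b := by
  simp [graphEquiv]

/-- Decompose functions according to fibers of `β`. -/
def fiberPiEquiv {P I γ : Type*} (β : P → I) :
    (P → γ) ≃ ∀ i : I, ({p : P // β p = i} → γ) where
  toFun f i e := f e.1
  invFun F p := F (β p) ⟨p, rfl⟩
  left_inv f := rfl
  right_inv F := by
    funext i e
    obtain ⟨p, hp⟩ := e
    subst hp
    rfl

lemma card_forced {A : Type*} [Fintype A] (p : A → Prop) (v : A → Prop) :
    Nat.card {g : A → Prop // ∀ a, p a → (g a ↔ v a)} = 2 ^ (Nat.card {a // ¬ p a}) := by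
  classical
  have e : {g : A → Prop // ∀ a, p a → (g a ↔ v a)} ≃ ({a // ¬ p a} → Prop) := {
    toFun := fun g a => g.1 a.1
    invFun := fun h => ⟨fun a => if hp : p a then v a else h ⟨a, hp⟩,
      fun a hp => by simp [hp]⟩
    left_inv := fun g => by
      apply Subtype.ext
      funext a
      by_cases hp : p a
      · simp only [hp, dif_pos]
        exact propext (g.2 a hp).symm
      · simp [hp]
    right_inv := fun h => by
      funext a
      simp [a.2] }
  rw [Nat.card_congr e, Nat.card_eq_fintype_card, Nat.card_eq_fintype_card,
    Fintype.card_fun, Fintype.card_congr Equiv.propEquivBool, Fintype.card_bool]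

lemma card_exists_true {A : Type*} [Fintype A] :
    Nat.card {g : A → Prop // ∃ a, g a} = 2 ^ (Fintype.card A) - 1 := by
  classical
  have h1 : Fintype.card {g : A → Prop // ¬ ∃ a, g a} = 1 := by
    rw [Fintype.card_eq_one_iff]
    refine ⟨⟨fun _ => False, by simp⟩, ?_⟩
    rintro ⟨g, hg⟩
    apply Subtype.ext
    funext a
    simp only [eq_iff_iff, iff_false]
    exact fun h => hg ⟨a, h⟩
  have h2 := Fintype.card_subtype_compl (fun g : A → Prop => ¬ ∃ a, g a)
  simp only [not_not] at h2
  rw [Nat.card_eq_fintype_card, h2, h1, Fintype.card_fun,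
    Fintype.card_congr Equiv.propEquivBool, Fintype.card_bool]

end ConfigProof


namespace ConfigProof
open Finset

variable {n : ℕ} (X₁ X₂ : Finset (Fin n)) (x : Fin n)

/-- vertices outside the configuration -/
abbrev Ovtx := {y : Fin n // y ∉ X₁ ∧ y ∉ X₂ ∧ y ≠ x}

abbrev Idx := Unit ⊕ (Ovtx X₁ X₂ x ⊕ Ovtx X₁ X₂ x)

def inS (z : Fin n) : Prop := z ∈ X₁ ∨ z ∈ X₂ ∨ z = x

def pairClass (u v : Fin n) : Idx X₁ X₂ x :=
  if hv : v ∉ X₁ ∧ v ∉ X₂ ∧ v ≠ x then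
    (if u ∈ X₁ then .inr (.inl ⟨v, hv⟩) else if u ∈ X₂ then .inr (.inr ⟨v, hv⟩) else .inl ())
  else if hu : u ∉ X₁ ∧ u ∉ X₂ ∧ u ≠ x then
    (if v ∈ X₁ then .inr (.inl ⟨u, hu⟩) else if v ∈ X₂ then .inr (.inr ⟨u, hu⟩) else .inl ())
  else .inl ()

lemma pairClass_symm (u v : Fin n) : pairClass X₁ X₂ x u v = pairClass X₁ X₂ x v u := by
  unfold pairClass
  split_ifs <;> simp_all

def β (e : {e : Sym2 (Fin n) // ¬ e.IsDiag}) : Idx X₁ X₂ x :=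
  Sym2.lift ⟨pairClass X₁ X₂ x, pairClass_symm X₁ X₂ x⟩ e.1

lemma β_mk {a b : Fin n} (h : ¬ (s(a,b) : Sym2 (Fin n)).IsDiag) :
    β X₁ X₂ x ⟨s(a,b), h⟩ = pairClass X₁ X₂ x a b := rfl

lemma pairClass_bothS {a b : Fin n} (ha : inS X₁ X₂ x a) (hb : inS X₁ X₂ x b) :
    pairClass X₁ X₂ x a b = .inl () := by
  unfold pairClass
  unfold inS at ha hb
  split_ifs <;> tauto

lemma pairClass_left {y u : Fin n} (hy : y ∉ X₁ ∧ y ∉ X₂ ∧ y ≠ x) (hu : u ∈ X₁) :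
    pairClass X₁ X₂ x y u = .inr (.inl ⟨y, hy⟩) := by
  unfold pairClass
  split_ifs <;> tauto

lemma pairClass_right {y u : Fin n} (hy : y ∉ X₁ ∧ y ∉ X₂ ∧ y ≠ x)
    (hd : Disjoint X₁ X₂) (hu : u ∈ X₂) :
    pairClass X₁ X₂ x y u = .inr (.inr ⟨y, hy⟩) := by
  have : u ∉ X₁ := fun h => (Finset.disjoint_left.mp hd h) hu
  unfold pairClass
  split_ifs <;> tauto

lemma pairClass_inl_inv {a b : Fin n} {y : Ovtx X₁ X₂ x}
    (h : pairClass X₁ X₂ x a b = .inr (.inl y)) :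
    (a = y.1 ∧ b ∈ X₁) ∨ (b = y.1 ∧ a ∈ X₁) := by
  obtain ⟨y, hy⟩ := y
  unfold pairClass at h
  split_ifs at h <;> simp_all <;> tauto

lemma pairClass_inr_inv {a b : Fin n} {y : Ovtx X₁ X₂ x}
    (h : pairClass X₁ X₂ x a b = .inr (.inr y)) :
    (a = y.1 ∧ b ∈ X₂) ∨ (b = y.1 ∧ a ∈ X₂) := by
  obtain ⟨y, hy⟩ := y
  unfold pairClass at h
  split_ifs at h <;> simp_all <;> tauto

lemma β_inl_iff (e : {e : Sym2 (Fin n) // ¬ e.IsDiag}) :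
    (β X₁ X₂ x e = .inl () ∧ ¬ (∀ z ∈ e.1, inS X₁ X₂ x z)) ↔
    (∀ z ∈ e.1, z ∉ X₁ ∧ z ∉ X₂) := by
  obtain ⟨e, hnd⟩ := e
  induction e with
  | _ a b =>
    have hab : a ≠ b := by rwa [Sym2.mk_isDiag_iff] at hnd
    rw [β_mk]
    constructor
    · rintro ⟨hβ, hnS⟩
      push_neg at hnS
      obtain ⟨z, hz, hzS⟩ := hnS
      unfold inS at hzS
      push_neg at hzS
      rw [Sym2.mem_iff] at hz
      have key : a ∉ X₁ ∧ a ∉ X₂ ∧ b ∉ X₁ ∧ b ∉ X₂ := by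
        rcases hz with rfl | rfl
        · refine ⟨hzS.1, hzS.2.1, ?_, ?_⟩ <;> intro hb <;>
            unfold pairClass at hβ <;> split_ifs at hβ <;> tauto
        · refine ⟨?_, ?_, hzS.1, hzS.2.1⟩ <;> intro ha <;>
            unfold pairClass at hβ <;> split_ifs at hβ <;> tauto
      intro w hw
      rw [Sym2.mem_iff] at hw
      rcases hw with rfl | rfl <;> tauto
    · intro hall
      have ha := hall a (by rw [Sym2.mem_iff]; left; rfl)
      have hb := hall b (by rw [Sym2.mem_iff]; right; rfl)
      have hone : ¬ inS X₁ X₂ x a ∨ ¬ inS X₁ X₂ x b := by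
        unfold inS
        by_cases hax : a = x
        · right
          rintro (h | h | h)
          · exact hb.1 h
          · exact hb.2 h
          · exact hab (hax.trans h.symm)
        · left; tauto
      constructor
      · unfold pairClass
        split_ifs <;> tauto
      · intro hS
        have hSa := hS a (by rw [Sym2.mem_iff]; left; rfl)
        have hSb := hS b (by rw [Sym2.mem_iff]; right; rfl)
        tauto

end ConfigProof
namespace ConfigProof
open Finset
variable {n : ℕ} (X₁ X₂ : Finset (Fin n)) (x : Fin n)

def Cross (e : Sym2 (Fin n)) : Prop := ∃ u ∈ X₁, ∃ v ∈ X₂, e = s(u,v)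

lemma cross_mk_iff {a b : Fin n} :
    Cross X₁ X₂ s(a,b) ↔ (a ∈ X₁ ∧ b ∈ X₂) ∨ (b ∈ X₁ ∧ a ∈ X₂) := by
  constructor
  · rintro ⟨u, hu, v, hv, he⟩
    rw [Sym2.eq_iff] at he
    rcases he with ⟨rfl, rfl⟩ | ⟨rfl, rfl⟩ <;> tauto
  · rintro (⟨h1, h2⟩ | ⟨h1, h2⟩)
    · exact ⟨a, h1, b, h2, rfl⟩
    · exact ⟨b, h1, a, h2, Sym2.eq_swap.symm⟩

def Local : (i : Idx X₁ X₂ x) →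
    ({e : {e : Sym2 (Fin n) // ¬ e.IsDiag} // β X₁ X₂ x e = i} → Prop) → Prop
  | .inl _ => fun g => ∀ e, (∀ z ∈ e.1.1, inS X₁ X₂ x z) → (g e ↔ ¬ Cross X₁ X₂ e.1.1)
  | .inr (.inl _) => fun g => ∃ e, g e
  | .inr (.inr _) => fun g => ∃ e, g e

def Qpred (f : {e : Sym2 (Fin n) // ¬ e.IsDiag} → Prop) : Prop :=
  ∀ i, Local X₁ X₂ x i (fun e => f e.1)

variable {G : SimpleGraph (Fin n)}

lemma adj_iff_not_cross (hd : Disjoint X₁ X₂) (hx1 : x ∉ X₁) (hx2 : x ∉ X₂)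
    (hcl1 : ∀ u ∈ X₁, ∀ v ∈ X₁, u ≠ v → G.Adj u v)
    (hcl2 : ∀ u ∈ X₂, ∀ v ∈ X₂, u ≠ v → G.Adj u v)
    (hcr : ∀ u ∈ X₁, ∀ v ∈ X₂, ¬ G.Adj u v)
    (hax1 : ∀ u ∈ X₁, G.Adj x u) (hax2 : ∀ u ∈ X₂, G.Adj x u)
    {a b : Fin n} (hab : a ≠ b) (ha : inS X₁ X₂ x a) (hb : inS X₁ X₂ x b) :
    G.Adj a b ↔ ¬ Cross X₁ X₂ s(a,b) := by
  rw [cross_mk_iff]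
  have hd' := Finset.disjoint_left.mp hd
  unfold inS at ha hb
  rcases ha with ha | ha | rfl <;> rcases hb with hb | hb | rfl
  · exact iff_of_true (hcl1 a ha b hb hab)
      (by rintro (⟨h1, h2⟩ | ⟨h1, h2⟩) <;> [exact hd' hb h2; exact hd' ha h2])
  · exact iff_of_false (hcr a ha b hb) (not_not_intro (Or.inl ⟨ha, hb⟩))
  · exact iff_of_true ((hax1 a ha).symm)
      (by rintro (⟨h1, h2⟩ | ⟨h1, h2⟩) <;> [exact hx2 h2; exact hx1 h1])
  · exact iff_of_false (fun h => hcr b hb a ha h.symm) (not_not_intro (Or.inr ⟨hb, ha⟩))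
  · exact iff_of_true (hcl2 a ha b hb hab)
      (by rintro (⟨h1, h2⟩ | ⟨h1, h2⟩) <;> [exact hd' h1 ha; exact hd' h1 hb])
  · exact iff_of_true ((hax2 a ha).symm)
      (by rintro (⟨h1, h2⟩ | ⟨h1, h2⟩) <;> [exact hx2 h2; exact hx1 h1])
  · exact iff_of_true (hax1 b hb)
      (by rintro (⟨h1, h2⟩ | ⟨h1, h2⟩) <;> [exact hx1 h1; exact hx2 h2])
  · exact iff_of_true (hax2 b hb)
      (by rintro (⟨h1, h2⟩ | ⟨h1, h2⟩) <;> [exact hx1 h1; exact hx2 h2])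
  · exact absurd rfl hab

lemma isConfig_iff (hd : Disjoint X₁ X₂) (hx1 : x ∉ X₁) (hx2 : x ∉ X₂)
    (h1 : X₁.Nonempty) (h2 : X₂.Nonempty) :
    IsConfig G X₁ X₂ x ↔ Qpred X₁ X₂ x (graphEquiv n G) := by
  constructor
  · rintro ⟨-, -, -, -, -, hcl1, hcl2, hcr, hax1, hax2, hout⟩
    rintro (⟨⟩ | (y | y))
    · rintro ⟨⟨e, hnd⟩, -⟩
      induction e with
      | _ a b =>
        intro hS
        have hab : a ≠ b := by rwa [Sym2.mk_isDiag_iff] at hnd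
        show (s(a,b) ∈ G.edgeSet) ↔ ¬ Cross X₁ X₂ s(a,b)
        rw [SimpleGraph.mem_edgeSet]
        exact adj_iff_not_cross X₁ X₂ x hd hx1 hx2 hcl1 hcl2 hcr hax1 hax2 hab
          (hS a (by rw [Sym2.mem_iff]; left; rfl)) (hS b (by rw [Sym2.mem_iff]; right; rfl))
    · obtain ⟨u, hu, hadj⟩ := (hout y.1 y.2.1 y.2.2.1).1
      have hnd : ¬ (s(y.1, u) : Sym2 (Fin n)).IsDiag := by
        rw [Sym2.mk_isDiag_iff]
        exact fun h => y.2.1 (h ▸ hu)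
      refine ⟨⟨⟨s(y.1, u), hnd⟩, ?_⟩, (SimpleGraph.mem_edgeSet G).mpr hadj⟩
      rw [β_mk]
      exact pairClass_left X₁ X₂ x y.2 hu
    · obtain ⟨u, hu, hadj⟩ := (hout y.1 y.2.1 y.2.2.1).2
      have hnd : ¬ (s(y.1, u) : Sym2 (Fin n)).IsDiag := by
        rw [Sym2.mk_isDiag_iff]
        exact fun h => y.2.2.1 (h ▸ hu)
      refine ⟨⟨⟨s(y.1, u), hnd⟩, ?_⟩, (SimpleGraph.mem_edgeSet G).mpr hadj⟩
      rw [β_mk]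
      exact pairClass_right X₁ X₂ x y.2 hd hu
  · intro hQ
    have hinl := hQ (.inl ())
    have key : ∀ a b : Fin n, a ≠ b → inS X₁ X₂ x a → inS X₁ X₂ x b →
        (G.Adj a b ↔ ¬ Cross X₁ X₂ s(a,b)) := by
      intro a b hab ha hb
      have hnd : ¬ (s(a,b) : Sym2 (Fin n)).IsDiag := by rwa [Sym2.mk_isDiag_iff]
      have := hinl ⟨⟨s(a,b), hnd⟩, by rw [β_mk]; exact pairClass_bothS X₁ X₂ x ha hb⟩
        (by intro z hz; rw [Sym2.mem_iff] at hz; rcases hz with rfl | rfl <;> assumption)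
      rw [← SimpleGraph.mem_edgeSet]
      exact this
    have hd' := Finset.disjoint_left.mp hd
    have hcl1 : ∀ u ∈ X₁, ∀ v ∈ X₁, u ≠ v → G.Adj u v := by
      intro u hu v hv huv
      refine (key u v huv (Or.inl hu) (Or.inl hv)).mpr ?_
      rw [cross_mk_iff]
      rintro (⟨q1, q2⟩ | ⟨q1, q2⟩) <;> [exact hd' hv q2; exact hd' hu q2]
    have hcl2 : ∀ u ∈ X₂, ∀ v ∈ X₂, u ≠ v → G.Adj u v := by
      intro u hu v hv huv
      refine (key u v huv (Or.inr (Or.inl hu)) (Or.inr (Or.inl hv))).mpr ?_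
      rw [cross_mk_iff]
      rintro (⟨q1, q2⟩ | ⟨q1, q2⟩) <;> [exact hd' q1 hu; exact hd' q1 hv]
    have hcr : ∀ u ∈ X₁, ∀ v ∈ X₂, ¬ G.Adj u v := by
      intro u hu v hv hadj
      have huv : u ≠ v := fun h => hd' hu (h ▸ hv)
      exact (key u v huv (Or.inl hu) (Or.inr (Or.inl hv))).mp hadj
        (cross_mk_iff X₁ X₂ |>.mpr (Or.inl ⟨hu, hv⟩))
    have hax1 : ∀ u ∈ X₁, G.Adj x u := by
      intro u hu
      have hxu : x ≠ u := fun h => hx1 (h ▸ hu)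
      refine (key x u hxu (Or.inr (Or.inr rfl)) (Or.inl hu)).mpr ?_
      rw [cross_mk_iff]
      rintro (⟨q1, q2⟩ | ⟨q1, q2⟩) <;> [exact hx1 q1; exact hx2 q2]
    have hax2 : ∀ u ∈ X₂, G.Adj x u := by
      intro u hu
      have hxu : x ≠ u := fun h => hx2 (h ▸ hu)
      refine (key x u hxu (Or.inr (Or.inr rfl)) (Or.inr (Or.inl hu))).mpr ?_
      rw [cross_mk_iff]
      rintro (⟨q1, q2⟩ | ⟨q1, q2⟩) <;> [exact hx1 q1; exact hx2 q2]
    refine ⟨h1, h2, hd, hx1, hx2, hcl1, hcl2, hcr, hax1, hax2, ?_⟩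
    intro y hy1 hy2
    by_cases hyx : y = x
    · subst hyx
      obtain ⟨u, hu⟩ := h1
      obtain ⟨v, hv⟩ := h2
      exact ⟨⟨u, hu, hax1 u hu⟩, ⟨v, hv, hax2 v hv⟩⟩
    · constructor
      · obtain ⟨⟨⟨e, hnd⟩, hβ⟩, hf⟩ := hQ (.inr (.inl ⟨y, hy1, hy2, hyx⟩))
        induction e with
        | _ a b =>
          rw [β_mk] at hβ
          rcases pairClass_inl_inv X₁ X₂ x hβ with ⟨rfl, hb⟩ | ⟨rfl, ha⟩
          · exact ⟨b, hb, (SimpleGraph.mem_edgeSet G).mp hf⟩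
          · exact ⟨a, ha, (SimpleGraph.mem_edgeSet G).mp (Sym2.eq_swap ▸ hf : s(b,a) ∈ G.edgeSet)⟩
      · obtain ⟨⟨⟨e, hnd⟩, hβ⟩, hf⟩ := hQ (.inr (.inr ⟨y, hy1, hy2, hyx⟩))
        induction e with
        | _ a b =>
          rw [β_mk] at hβ
          rcases pairClass_inr_inv X₁ X₂ x hβ with ⟨rfl, hb⟩ | ⟨rfl, ha⟩
          · exact ⟨b, hb, (SimpleGraph.mem_edgeSet G).mp hf⟩
          · exact ⟨a, ha, (SimpleGraph.mem_edgeSet G).mp (Sym2.eq_swap ▸ hf : s(b,a) ∈ G.edgeSet)⟩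


variable (G)

lemma fiber_inl_card (y : Ovtx X₁ X₂ x) (hd : Disjoint X₁ X₂) :
    Fintype.card {e : {e : Sym2 (Fin n) // ¬ e.IsDiag} // β X₁ X₂ x e = .inr (.inl y)} =
      X₁.card := by
  classical
  have hbij : Function.Bijective (fun u : {u : Fin n // u ∈ X₁} =>
      (⟨⟨s(y.1, u.1), by rw [Sym2.mk_isDiag_iff]; exact fun h => y.2.1 (h ▸ u.2)⟩,
        by rw [β_mk]; exact pairClass_left X₁ X₂ x y.2 u.2⟩ :
        {e : {e : Sym2 (Fin n) // ¬ e.IsDiag} // β X₁ X₂ x e = .inr (.inl y)})) := by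
    constructor
    · rintro ⟨u, hu⟩ ⟨v, hv⟩ h
      simp only [Subtype.mk.injEq, Sym2.eq_iff] at h
      apply Subtype.ext
      rcases h with ⟨-, h⟩ | ⟨h1, h2⟩
      · exact h
      · exact absurd (h1 ▸ hv) y.2.1
    · rintro ⟨⟨e, hnd⟩, hβ⟩
      induction e with
      | _ a b =>
        rw [β_mk] at hβ
        rcases pairClass_inl_inv X₁ X₂ x hβ with ⟨ha, hb⟩ | ⟨hb, ha⟩
        · exact ⟨⟨b, hb⟩, by subst ha; rfl⟩
        · exact ⟨⟨a, ha⟩, by subst hb; apply Subtype.ext; apply Subtype.ext; exact Sym2.eq_swap⟩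
  rw [← Fintype.card_congr (Equiv.ofBijective _ hbij), Fintype.card_coe]

lemma fiber_inr_card (y : Ovtx X₁ X₂ x) (hd : Disjoint X₁ X₂) :
    Fintype.card {e : {e : Sym2 (Fin n) // ¬ e.IsDiag} // β X₁ X₂ x e = .inr (.inr y)} =
      X₂.card := by
  classical
  have hbij : Function.Bijective (fun u : {u : Fin n // u ∈ X₂} =>
      (⟨⟨s(y.1, u.1), by rw [Sym2.mk_isDiag_iff]; exact fun h => y.2.2.1 (h ▸ u.2)⟩,
        by rw [β_mk]; exact pairClass_right X₁ X₂ x y.2 hd u.2⟩ :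
        {e : {e : Sym2 (Fin n) // ¬ e.IsDiag} // β X₁ X₂ x e = .inr (.inr y)})) := by
    constructor
    · rintro ⟨u, hu⟩ ⟨v, hv⟩ h
      simp only [Subtype.mk.injEq, Sym2.eq_iff] at h
      apply Subtype.ext
      rcases h with ⟨-, h⟩ | ⟨h1, h2⟩
      · exact h
      · exact absurd (h1 ▸ hv) y.2.2.1
    · rintro ⟨⟨e, hnd⟩, hβ⟩
      induction e with
      | _ a b =>
        rw [β_mk] at hβ
        rcases pairClass_inr_inv X₁ X₂ x hβ with ⟨ha, hb⟩ | ⟨hb, ha⟩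
        · exact ⟨⟨b, hb⟩, by subst ha; rfl⟩
        · exact ⟨⟨a, ha⟩, by subst hb; apply Subtype.ext; apply Subtype.ext; exact Sym2.eq_swap⟩
  rw [← Fintype.card_congr (Equiv.ofBijective _ hbij), Fintype.card_coe]

lemma card_sym2_in {n : ℕ} (T : Finset (Fin n)) :
    Nat.card {e : Sym2 (Fin n) // ¬ e.IsDiag ∧ ∀ z ∈ e, z ∈ T} = T.card.choose 2 := by
  classical
  have φbij : Function.Bijective
      (fun e : {e : Sym2 {z : Fin n // z ∈ T} // ¬ e.IsDiag} =>
        (⟨Sym2.map Subtype.val e.1, by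
          refine ⟨fun hd => e.2 ?_, fun z hz => ?_⟩
          · rwa [Sym2.isDiag_map Subtype.val_injective] at hd
          · obtain ⟨a, -, rfl⟩ := Sym2.mem_map.mp hz
            exact a.2⟩ :
          {e : Sym2 (Fin n) // ¬ e.IsDiag ∧ ∀ z ∈ e, z ∈ T})) := by
    constructor
    · rintro ⟨e1, h1⟩ ⟨e2, h2⟩ h
      apply Subtype.ext
      exact Sym2.map.injective Subtype.val_injective (congrArg Subtype.val h)
    · rintro ⟨e, hnd, hsub⟩
      induction e with
      | _ a b =>
        refine ⟨⟨s(⟨a, hsub a (by simp)⟩, ⟨b, hsub b (by simp)⟩), ?_⟩, ?_⟩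
        · rw [Sym2.mk_isDiag_iff] at hnd ⊢
          exact fun h => hnd (congrArg Subtype.val h)
        · apply Subtype.ext
          simp [Sym2.map_pair_eq]
  rw [← Nat.card_congr (Equiv.ofBijective _ φbij), Nat.card_eq_fintype_card,
    Sym2.card_subtype_not_diag, Fintype.card_coe]


lemma card_local_inl :
    Nat.card {g : ({e : {e : Sym2 (Fin n) // ¬ e.IsDiag} // β X₁ X₂ x e = .inl ()} → Prop) //
        Local X₁ X₂ x (.inl ()) g} = 2 ^ (((X₁ ∪ X₂)ᶜ).card.choose 2) := by
  classical
  refine (card_forced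
    (fun e : {e : {e : Sym2 (Fin n) // ¬ e.IsDiag} // β X₁ X₂ x e = .inl ()} =>
      ∀ z ∈ e.1.1, inS X₁ X₂ x z)
    (fun e : {e : {e : Sym2 (Fin n) // ¬ e.IsDiag} // β X₁ X₂ x e = .inl ()} =>
      ¬ Cross X₁ X₂ e.1.1)).trans ?_
  congr 1
  have e1 := Equiv.subtypeSubtypeEquivSubtypeInter
    (fun e : {e : Sym2 (Fin n) // ¬ e.IsDiag} => β X₁ X₂ x e = .inl ())
    (fun e : {e : Sym2 (Fin n) // ¬ e.IsDiag} => ¬ ∀ z ∈ e.1, inS X₁ X₂ x z)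
  have e2 : {e : {e : Sym2 (Fin n) // ¬ e.IsDiag} //
      β X₁ X₂ x e = .inl () ∧ ¬ ∀ z ∈ e.1, inS X₁ X₂ x z} ≃
      {e : {e : Sym2 (Fin n) // ¬ e.IsDiag} // ∀ z ∈ e.1, z ∈ (X₁ ∪ X₂)ᶜ} := by
    apply Equiv.subtypeEquivRight
    intro e
    rw [β_inl_iff]
    constructor <;> intro h z hz <;> have := h z hz <;>
      simp only [Finset.mem_compl, Finset.mem_union] at * <;> tauto
  have e3 := Equiv.subtypeSubtypeEquivSubtypeInter
    (fun e : Sym2 (Fin n) => ¬ e.IsDiag)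
    (fun e : Sym2 (Fin n) => ∀ z ∈ e, z ∈ (X₁ ∪ X₂)ᶜ)
  rw [Nat.card_congr (((e1).trans e2).trans e3), card_sym2_in]

lemma card_local_inr₁ (y : Ovtx X₁ X₂ x) (hd : Disjoint X₁ X₂) :
    Nat.card {g : ({e : {e : Sym2 (Fin n) // ¬ e.IsDiag} // β X₁ X₂ x e = .inr (.inl y)} → Prop) //
        Local X₁ X₂ x (.inr (.inl y)) g} = 2 ^ X₁.card - 1 := by
  refine (card_exists_true).trans ?_
  rw [fiber_inl_card X₁ X₂ x y hd]

lemma card_local_inr₂ (y : Ovtx X₁ X₂ x) (hd : Disjoint X₁ X₂) :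
    Nat.card {g : ({e : {e : Sym2 (Fin n) // ¬ e.IsDiag} // β X₁ X₂ x e = .inr (.inr y)} → Prop) //
        Local X₁ X₂ x (.inr (.inr y)) g} = 2 ^ X₂.card - 1 := by
  refine (card_exists_true).trans ?_
  rw [fiber_inr_card X₁ X₂ x y hd]

lemma card_isConfig (hd : Disjoint X₁ X₂) (hx1 : x ∉ X₁) (hx2 : x ∉ X₂)
    (h1 : X₁.Nonempty) (h2 : X₂.Nonempty) :
    Nat.card {G : SimpleGraph (Fin n) // IsConfig G X₁ X₂ x} =
      2 ^ (((X₁ ∪ X₂)ᶜ).card.choose 2) *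
        ((2 ^ X₁.card - 1) ^ (Fintype.card (Ovtx X₁ X₂ x)) *
         (2 ^ X₂.card - 1) ^ (Fintype.card (Ovtx X₁ X₂ x))) := by
  classical
  rw [Nat.card_congr ((graphEquiv n).subtypeEquiv
    (fun G => isConfig_iff X₁ X₂ x hd hx1 hx2 h1 h2))]
  rw [Nat.card_congr (((fiberPiEquiv (β X₁ X₂ x)).subtypeEquiv
    (fun f => Iff.rfl (a := Qpred X₁ X₂ x f))).trans Equiv.subtypePiEquivPi)]
  rw [Nat.card_pi, Fintype.prod_sum_type, Fintype.prod_sum_type, Fintype.prod_unique]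
  have hy1 : ∀ y : Ovtx X₁ X₂ x,
      Nat.card {g : ({e : {e : Sym2 (Fin n) // ¬ e.IsDiag} // β X₁ X₂ x e = .inr (.inl y)} → Prop) //
        Local X₁ X₂ x (.inr (.inl y)) g} = 2 ^ X₁.card - 1 :=
    fun y => card_local_inr₁ X₁ X₂ x y hd
  have hy2 : ∀ y : Ovtx X₁ X₂ x,
      Nat.card {g : ({e : {e : Sym2 (Fin n) // ¬ e.IsDiag} // β X₁ X₂ x e = .inr (.inr y)} → Prop) //
        Local X₁ X₂ x (.inr (.inr y)) g} = 2 ^ X₂.card - 1 :=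
    fun y => card_local_inr₂ X₁ X₂ x y hd
  simp only [hy1, hy2, Finset.prod_const, Finset.card_univ]
  have : (default : Unit) = () := rfl
  rw [this, card_local_inl]


lemma card_Ovtx (hd : Disjoint X₁ X₂) (hx1 : x ∉ X₁) (hx2 : x ∉ X₂) :
    Fintype.card (Ovtx X₁ X₂ x) = n - X₁.card - X₂.card - 1 := by
  classical
  rw [Fintype.card_subtype]
  have h : filter (fun y => y ∉ X₁ ∧ y ∉ X₂ ∧ y ≠ x) univ = (X₁ ∪ X₂ ∪ {x})ᶜ := by
    ext z
    simp [Finset.mem_compl, Finset.mem_union, not_or]; tauto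
  rw [h, Finset.card_compl, Fintype.card_fin]
  have h2 : (X₁ ∪ X₂ ∪ {x}).card = X₁.card + X₂.card + 1 := by
    rw [Finset.card_union_of_disjoint
        (Finset.disjoint_singleton_right.mpr (by simp [hx1, hx2])),
      Finset.card_union_of_disjoint hd, Finset.card_singleton]
  omega

/-- number of structural triples -/
lemma card_struct_triples {k l : ℕ} (hn : k + l ≤ n) :
    (filter (fun t : Finset (Fin n) × Finset (Fin n) × Fin n =>
        t.1.card = k ∧ t.2.1.card = l ∧ Disjoint t.1 t.2.1 ∧ t.2.2 ∉ t.1 ∧ t.2.2 ∉ t.2.1)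
      univ).card = n.choose k * ((n-k).choose l * (n - k - l)) := by
  classical
  rw [Finset.card_filter, Fintype.sum_prod_type]
  have step1 : ∀ X1 : Finset (Fin n),
      (∑ p : Finset (Fin n) × Fin n, if (X1.card = k ∧ p.1.card = l ∧ Disjoint X1 p.1 ∧
          p.2 ∉ X1 ∧ p.2 ∉ p.1) then (1:ℕ) else 0) =
      if X1.card = k then (n-k).choose l * (n - k - l) else 0 := by
    intro X1
    rw [Fintype.sum_prod_type]
    have step2 : ∀ X2 : Finset (Fin n),
        (∑ y : Fin n, if (X1.card = k ∧ X2.card = l ∧ Disjoint X1 X2 ∧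
            y ∉ X1 ∧ y ∉ X2) then (1:ℕ) else 0) =
        if (X1.card = k ∧ X2.card = l ∧ Disjoint X1 X2) then (n - k - l) else 0 := by
      intro X2
      by_cases h : X1.card = k ∧ X2.card = l ∧ Disjoint X1 X2
      · rw [if_pos h]
        have : ∀ y : Fin n, (if (X1.card = k ∧ X2.card = l ∧ Disjoint X1 X2 ∧
            y ∉ X1 ∧ y ∉ X2) then (1:ℕ) else 0) = if y ∈ (X1 ∪ X2)ᶜ then 1 else 0 := by
          intro y
          by_cases hy : y ∈ (X1 ∪ X2)ᶜ
          · rw [if_pos hy, if_pos]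
            simp only [Finset.mem_compl, Finset.mem_union, not_or] at hy
            exact ⟨h.1, h.2.1, h.2.2, hy.1, hy.2⟩
          · rw [if_neg hy, if_neg]
            simp only [Finset.mem_compl, Finset.mem_union, not_or] at hy
            push_neg at hy
            rintro ⟨-, -, -, q1, q2⟩
            exact q2 (hy q1)
        rw [Finset.sum_congr rfl (fun y _ => this y)]
        rw [Finset.sum_boole]
        rw [Finset.filter_univ_mem]
        rw [Finset.card_compl, Fintype.card_fin,
          Finset.card_union_of_disjoint h.2.2, h.1, h.2.1]
        · norm_cast
          omega
      · rw [if_neg h]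
        apply Finset.sum_eq_zero
        intro y _
        rw [if_neg]
        rintro ⟨q1, q2, q3, -, -⟩
        exact h ⟨q1, q2, q3⟩
    rw [Finset.sum_congr rfl (fun X2 _ => step2 X2)]
    by_cases h1 : X1.card = k
    · rw [if_pos h1]
      have : ∀ X2 : Finset (Fin n), (if (X1.card = k ∧ X2.card = l ∧ Disjoint X1 X2)
          then (n - k - l) else 0) = if X2 ∈ X1ᶜ.powersetCard l then (n - k - l) else 0 := by
        intro X2
        congr 1
        apply propext
        rw [Finset.mem_powersetCard]
        constructor
        · rintro ⟨-, q2, q3⟩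
          refine ⟨?_, q2⟩
          intro a ha
          exact Finset.mem_compl.mpr (fun hmem => Finset.disjoint_left.mp q3 hmem ha)
        · rintro ⟨hs, hc⟩
          refine ⟨h1, hc, Finset.disjoint_left.mpr ?_⟩
          intro a ha1 ha2
          exact absurd ha1 (Finset.mem_compl.mp (hs ha2))
      rw [Finset.sum_congr rfl (fun X2 _ => this X2), ← Finset.sum_filter,
        Finset.filter_univ_mem, Finset.sum_const, Finset.card_powersetCard,
        Finset.card_compl, Fintype.card_fin, h1, smul_eq_mul]
    · rw [if_neg h1]
      apply Finset.sum_eq_zero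
      intro X2 _
      rw [if_neg]
      rintro ⟨q1, -, -⟩
      exact h1 q1
  rw [Finset.sum_congr rfl (fun X1 _ => step1 X1), ← Finset.sum_filter]
  have : filter (fun X1 : Finset (Fin n) => X1.card = k) univ = Finset.univ.powersetCard k := by
    ext X1
    simp [Finset.mem_powersetCard]
  rw [this, Finset.sum_const, Finset.card_powersetCard, Finset.card_univ, Fintype.card_fin,
    smul_eq_mul]


end ConfigProof

open Finset in
lemma sum_Xcount (n k l : ℕ) (hk : 1 ≤ k) (hl : 1 ≤ l) (hn : k + l + 1 ≤ n) :
    ∑ G : SimpleGraph (Fin n), Xcount n k l G =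
      n.choose k * ((n-k).choose l * (n - k - l)) *
        (2 ^ ((n-k-l).choose 2) * ((2^k - 1)^(n-k-l-1) * (2^l - 1)^(n-k-l-1))) := by
  classical
  have h1 : ∀ G : SimpleGraph (Fin n), Xcount n k l G =
      ∑ t : Finset (Fin n) × Finset (Fin n) × Fin n,
        if (t.1.card = k ∧ t.2.1.card = l ∧ IsConfig G t.1 t.2.1 t.2.2) then 1 else 0 := by
    intro G
    rw [Xcount, Nat.card_eq_fintype_card, Fintype.card_subtype, Finset.card_filter]
  rw [Finset.sum_congr rfl (fun G _ => h1 G), Finset.sum_comm]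
  have h2 : ∀ t : Finset (Fin n) × Finset (Fin n) × Fin n,
      (∑ G : SimpleGraph (Fin n),
        if (t.1.card = k ∧ t.2.1.card = l ∧ IsConfig G t.1 t.2.1 t.2.2) then (1:ℕ) else 0) =
      if (t.1.card = k ∧ t.2.1.card = l ∧ Disjoint t.1 t.2.1 ∧ t.2.2 ∉ t.1 ∧ t.2.2 ∉ t.2.1)
      then (2 ^ ((n-k-l).choose 2) * ((2^k - 1)^(n-k-l-1) * (2^l - 1)^(n-k-l-1))) else 0 := by
    rintro ⟨X1, X2, x⟩
    simp only
    rw [← Finset.card_filter]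
    by_cases hs : X1.card = k ∧ X2.card = l ∧ Disjoint X1 X2 ∧ x ∉ X1 ∧ x ∉ X2
    · obtain ⟨hc1, hc2, hd, hx1, hx2⟩ := hs
      rw [if_pos ⟨hc1, hc2, hd, hx1, hx2⟩]
      have hfil : filter (fun G : SimpleGraph (Fin n) =>
            X1.card = k ∧ X2.card = l ∧ IsConfig G X1 X2 x) univ
          = filter (fun G => IsConfig G X1 X2 x) univ := by
        ext G
        simp only [Finset.mem_filter, Finset.mem_univ, true_and]
        exact ⟨fun h => h.2.2, fun h => ⟨hc1, hc2, h⟩⟩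
      rw [hfil, ← Fintype.card_subtype, ← Nat.card_eq_fintype_card,
        ConfigProof.card_isConfig X1 X2 x hd hx1 hx2
          (Finset.card_pos.mp (by omega)) (Finset.card_pos.mp (by omega)),
        ConfigProof.card_Ovtx X1 X2 x hd hx1 hx2]
      have hT : (X1 ∪ X2)ᶜ.card = n - k - l := by
        rw [Finset.card_compl, Finset.card_union_of_disjoint hd, hc1, hc2, Fintype.card_fin]
        omega
      rw [hT, hc1, hc2]
    · rw [if_neg hs]
      have : filter (fun G : SimpleGraph (Fin n) =>
          X1.card = k ∧ X2.card = l ∧ IsConfig G X1 X2 x) univ = ∅ := by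
        rw [Finset.filter_eq_empty_iff]
        rintro G - ⟨q1, q2, qc⟩
        obtain ⟨-, -, qd, qx1, qx2, -⟩ := qc
        exact hs ⟨q1, q2, qd, qx1, qx2⟩
      rw [this, Finset.card_empty]
  rw [Finset.sum_congr rfl (fun t _ => h2 t), ← Finset.sum_filter, Finset.sum_const,
    smul_eq_mul, ConfigProof.card_struct_triples (by omega)]


/-- Exact formula for the expectation of `X(k,l)` under `G(n,1/2)`. -/
theorem expect_Xcount_eq (n k l : ℕ) (hk : 1 ≤ k) (hl : 1 ≤ l) (hn : k + l + 1 ≤ n) :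
    expect n (fun G => (Xcount n k l G : ℝ)) =
      (Nat.factorial n : ℝ) / ((Nat.factorial k : ℝ) * (Nat.factorial l : ℝ) * (Nat.factorial (n - k - l) : ℝ)) * ((n - k - l : ℕ) : ℝ) *
        (2 : ℝ) ^ (-(((k : ℝ) + l) ^ 2) / 2 + ((k : ℝ) + l) / 2) *
        (2 : ℝ) ^ (-((k : ℝ) + l)) *
        (1 - (2 : ℝ) ^ (-(k : ℝ))) ^ (n - k - l - 1) *
        (1 - (2 : ℝ) ^ (-(l : ℝ))) ^ (n - k - l - 1) := by
  classical
  obtain ⟨m, hm⟩ : ∃ m, n = k + l + m + 1 := ⟨n - k - l - 1, by omega⟩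
  have hMkl : n - k - l = m + 1 := by omega
  have hm1 : n - k - l - 1 = m := by omega
  show (∑ G : SimpleGraph (Fin n), ((Xcount n k l G : ℕ) : ℝ)) / 2 ^ (n.choose 2) = _
  rw [← Nat.cast_sum, sum_Xcount n k l hk hl hn, hMkl, Nat.add_sub_cancel]
  -- cast the numerator
  have hck : ((n.choose k : ℕ) : ℝ) = (n.factorial : ℝ) / ((k.factorial : ℝ) * ((n-k).factorial : ℝ)) :=
    Nat.cast_choose ℝ (by omega)
  have hcl2 : (((n-k).choose l : ℕ) : ℝ) =
      ((n-k).factorial : ℝ) / ((l.factorial : ℝ) * ((m+1).factorial : ℝ)) := by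
    rw [Nat.cast_choose ℝ (show l ≤ n - k by omega)]
    rw [show n - k - l = m + 1 from hMkl]
  have h2k : ((2^k - 1 : ℕ) : ℝ) = 2^k - 1 := by
    rw [Nat.cast_sub Nat.one_le_two_pow]; push_cast; ring
  have h2l : ((2^l - 1 : ℕ) : ℝ) = 2^l - 1 := by
    rw [Nat.cast_sub Nat.one_le_two_pow]; push_cast; ring
  push_cast [hck, hcl2, h2k, h2l]
  -- rewrite the rpow factors
  have hpk : (1 - (2:ℝ)^(-(k:ℝ)))^m = ((2:ℝ)^k - 1)^m / (2:ℝ)^(k*m) := by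
    rw [Real.rpow_neg (by norm_num), Real.rpow_natCast, pow_mul, ← div_pow]
    congr 1
    rw [eq_div_iff (by positivity), sub_mul, one_mul, inv_mul_cancel₀ (by positivity)]
  have hpl : (1 - (2:ℝ)^(-(l:ℝ)))^m = ((2:ℝ)^l - 1)^m / (2:ℝ)^(l*m) := by
    rw [Real.rpow_neg (by norm_num), Real.rpow_natCast, pow_mul, ← div_pow]
    congr 1
    rw [eq_div_iff (by positivity), sub_mul, one_mul, inv_mul_cancel₀ (by positivity)]
  rw [hpk, hpl]
  set A := (2:ℝ) ^ (-(((k : ℝ) + l) ^ 2) / 2 + ((k : ℝ) + l) / 2) with hA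
  set B := (2:ℝ) ^ (-((k : ℝ) + l)) with hB
  have key : (2:ℝ)^((m+1).choose 2) * ((2:ℝ)^(k*m) * (2:ℝ)^(l*m)) =
      (2:ℝ)^(n.choose 2) * (A * B) := by
    rw [hA, hB, ← pow_add, ← pow_add, ← Real.rpow_natCast 2 ((m+1).choose 2 + (k*m + l*m)),
      ← Real.rpow_add (by norm_num), ← Real.rpow_natCast 2 (n.choose 2),
      ← Real.rpow_add (by norm_num)]
    congr 1
    rw [Nat.cast_add, Nat.cast_add, Nat.cast_choose_two, Nat.cast_choose_two, hm]
    push_cast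
    ring
  set P := (2:ℝ)^(k*m) with hP
  set Q := (2:ℝ)^(l*m) with hQ
  set R := (2:ℝ)^((m+1).choose 2) with hR
  set S := (2:ℝ)^(n.choose 2) with hS
  have hPne : P ≠ 0 := by rw [hP]; positivity
  have hQne : Q ≠ 0 := by rw [hQ]; positivity
  have hSne : S ≠ 0 := by rw [hS]; positivity
  clear_value A B P Q R S
  have hAB : A * B = R * P * Q / S := by
    rw [eq_div_iff hSne]
    linear_combination -key
  rw [mul_assoc _ A B, hAB]
  have hfact : ∀ a : ℕ, ((a.factorial : ℕ) : ℝ) ≠ 0 :=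
    fun a => Nat.cast_ne_zero.mpr a.factorial_ne_zero
  field_simp
end

section
/- Let k ≥ 1 and 0 ≤ j₁, j₂ ≤ k be integers. Let A₁, A₂, B₁, B₂ be finite sets, each of cardinality k, with A₁ ∩ A₂ = ∅, B₁ ∩ B₂ = ∅, A₁ ∩ B₂ = ∅, A₂ ∩ B₁ = ∅, |A₁ ∩ B₁| = j₁ and |A₂ ∩ B₂| = j₂, and set U = A₁ ∪ A₂ ∪ B₁ ∪ B₂ and j = j₁ + j₂. Then the proportion of subsets S ⊆ U that intersect each of A₁, A₂, B₁, B₂ (i.e., the number of such S divided by 2^{|U|}) equals (1 − 2^{−j₁})(1 − 2^{−j₂}) + 2^{−j₁}(1 − 2^{−j₂})(1 − 2^{−(k−j₁)})² + 2^{−j₂}(1 − 2^{−j₁})(1 − 2^{−(k−j₂)})² + 2^{−j}(1 − 2^{−(k−j₁)})²(1 − 2^{−(k−j₂)})². -/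
open Finset

lemma card_filter_powerset_union {α : Type*} [DecidableEq α] (V₁ V₂ : Finset α)
    (h : Disjoint V₁ V₂) (P Q : Finset α → Prop) [DecidablePred P] [DecidablePred Q] :
    ((V₁ ∪ V₂).powerset.filter (fun S => P (S ∩ V₁) ∧ Q (S ∩ V₂))).card
      = (V₁.powerset.filter P).card * (V₂.powerset.filter Q).card := by
  have e1 : ∀ S₁ S₂ : Finset α, S₁ ⊆ V₁ → S₂ ⊆ V₂ → (S₁ ∪ S₂) ∩ V₁ = S₁ := by
    intro S₁ S₂ h1 h2
    rw [union_inter_distrib_right, inter_eq_left.2 h1,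
      disjoint_iff_inter_eq_empty.1 (h.symm.mono_left h2), union_empty]
  have e2 : ∀ S₁ S₂ : Finset α, S₁ ⊆ V₁ → S₂ ⊆ V₂ → (S₁ ∪ S₂) ∩ V₂ = S₂ := by
    intro S₁ S₂ h1 h2
    rw [union_inter_distrib_right, inter_eq_left.2 h2,
      disjoint_iff_inter_eq_empty.1 (h.mono_left h1), empty_union]
  rw [← Finset.card_product]
  apply Finset.card_nbij' (fun S => (S ∩ V₁, S ∩ V₂)) (fun p => p.1 ∪ p.2)
  · intro S hS
    simp only [mem_coe, mem_filter, mem_powerset, mem_product] at *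
    exact ⟨⟨inter_subset_right, hS.2.1⟩, inter_subset_right, hS.2.2⟩
  · rintro ⟨S₁, S₂⟩ hp
    simp only [mem_coe, mem_filter, mem_powerset, mem_product] at hp
    obtain ⟨⟨h1, hP⟩, h2, hQ⟩ := hp
    simp only [mem_coe, mem_filter, mem_powerset, e1 S₁ S₂ h1 h2, e2 S₁ S₂ h1 h2]
    exact ⟨union_subset_union h1 h2, hP, hQ⟩
  · intro S hS
    simp only [mem_coe, mem_filter, mem_powerset] at hS
    exact (inter_union_distrib_left S V₁ V₂).symm.trans (inter_eq_left.2 hS.1)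
  · rintro ⟨S₁, S₂⟩ hp
    simp only [mem_coe, mem_filter, mem_powerset, mem_product] at hp
    obtain ⟨⟨h1, _⟩, h2, _⟩ := hp
    simp [e1 S₁ S₂ h1 h2, e2 S₁ S₂ h1 h2]

lemma card_hit_two {α : Type*} [DecidableEq α] (A B : Finset α) :
    ((A ∪ B).powerset.filter (fun S => (S ∩ A).Nonempty ∧ (S ∩ B).Nonempty)).card
      + (2 ^ (B \ A).card + 2 ^ (A \ B).card) = 2 ^ (A ∪ B).card + 1 := by
  have key : ∀ C : Finset α, C ⊆ A ∪ B →
      (A ∪ B).powerset.filter (fun S => S ∩ C = ∅) = ((A ∪ B) \ C).powerset := by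
    intro C _
    ext S
    simp only [mem_filter, mem_powerset, subset_sdiff, ← disjoint_iff_inter_eq_empty]
  have hmiss : ((A ∪ B).powerset.filter (fun S => S ∩ A = ∅ ∨ S ∩ B = ∅)).card
      + 1 = 2 ^ (B \ A).card + 2 ^ (A \ B).card := by
    rw [filter_or]
    have h2 := Finset.card_union_add_card_inter
      ((A ∪ B).powerset.filter (fun S => S ∩ A = ∅))
      ((A ∪ B).powerset.filter (fun S => S ∩ B = ∅))
    rw [← filter_and] at h2
    have hAB : (A ∪ B).powerset.filter (fun S => S ∩ A = ∅ ∧ S ∩ B = ∅)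
        = ({∅} : Finset (Finset α)) := by
      ext S
      simp only [mem_filter, mem_powerset, mem_singleton]
      constructor
      · rintro ⟨hS, hSA, hSB⟩
        rw [← inter_eq_left.2 hS, inter_union_distrib_left, hSA, hSB, union_empty]
      · rintro rfl; simp
    rw [key A subset_union_left, key B subset_union_right, hAB,
      union_sdiff_left, union_sdiff_right] at h2
    rw [key A subset_union_left, key B subset_union_right,
      union_sdiff_left, union_sdiff_right]
    simpa [card_powerset] using h2
  have hc : (A ∪ B).powerset.filter
        (fun S => ¬((S ∩ A).Nonempty ∧ (S ∩ B).Nonempty))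
      = (A ∪ B).powerset.filter (fun S => S ∩ A = ∅ ∨ S ∩ B = ∅) := by
    apply filter_congr
    intro S _
    rw [not_and_or, Finset.not_nonempty_iff_eq_empty, Finset.not_nonempty_iff_eq_empty]
  have htot := Finset.card_filter_add_card_filter_not
    (s := (A ∪ B).powerset) (p := fun S => (S ∩ A).Nonempty ∧ (S ∩ B).Nonempty)
  rw [hc, card_powerset] at htot
  omega


/-- Let `A₁, A₂, B₁, B₂` be `k`-element sets with the intersection
pattern `A₁ ∩ A₂ = ∅`, `B₁ ∩ B₂ = ∅`, `A₁ ∩ B₂ = ∅`, `A₂ ∩ B₁ = ∅`, `|A₁ ∩ B₁| = j₁`,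
`|A₂ ∩ B₂| = j₂`, and let `U = A₁ ∪ A₂ ∪ B₁ ∪ B₂`, `j = j₁ + j₂`. Then the proportion
of subsets `S ⊆ U` intersecting each of `A₁, A₂, B₁, B₂` equals
`(1 − 2^{−j₁})(1 − 2^{−j₂}) + 2^{−j₁}(1 − 2^{−j₂})(1 − 2^{−(k−j₁)})²
 + 2^{−j₂}(1 − 2^{−j₁})(1 − 2^{−(k−j₂)})² + 2^{−j}(1 − 2^{−(k−j₁)})²(1 − 2^{−(k−j₂)})²`. -/
theorem subset_hitting_proportion {α : Type*} [DecidableEq α]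
    (k j₁ j₂ : ℕ) (hk : 1 ≤ k) (hj₁ : j₁ ≤ k) (hj₂ : j₂ ≤ k)
    (A₁ A₂ B₁ B₂ : Finset α)
    (hA₁ : A₁.card = k) (hA₂ : A₂.card = k) (hB₁ : B₁.card = k) (hB₂ : B₂.card = k)
    (hA₁A₂ : A₁ ∩ A₂ = ∅) (hB₁B₂ : B₁ ∩ B₂ = ∅)
    (hA₁B₂ : A₁ ∩ B₂ = ∅) (hA₂B₁ : A₂ ∩ B₁ = ∅)
    (hA₁B₁ : (A₁ ∩ B₁).card = j₁) (hA₂B₂ : (A₂ ∩ B₂).card = j₂) :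
    (Nat.card {S : Finset α // S ⊆ A₁ ∪ A₂ ∪ B₁ ∪ B₂ ∧
        (S ∩ A₁).Nonempty ∧ (S ∩ A₂).Nonempty ∧ (S ∩ B₁).Nonempty ∧ (S ∩ B₂).Nonempty} : ℝ)
      / 2 ^ (A₁ ∪ A₂ ∪ B₁ ∪ B₂).card =
      (1 - (2:ℝ) ^ (-(j₁:ℝ))) * (1 - (2:ℝ) ^ (-(j₂:ℝ)))
      + (2:ℝ) ^ (-(j₁:ℝ)) * (1 - (2:ℝ) ^ (-(j₂:ℝ))) * (1 - (2:ℝ) ^ (-((k:ℝ) - j₁))) ^ 2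
      + (2:ℝ) ^ (-(j₂:ℝ)) * (1 - (2:ℝ) ^ (-(j₁:ℝ))) * (1 - (2:ℝ) ^ (-((k:ℝ) - j₂))) ^ 2
      + (2:ℝ) ^ (-((j₁:ℝ) + j₂)) * (1 - (2:ℝ) ^ (-((k:ℝ) - j₁))) ^ 2
          * (1 - (2:ℝ) ^ (-((k:ℝ) - j₂))) ^ 2 := by
  obtain ⟨m₁, hm₁⟩ : ∃ m, k = j₁ + m := ⟨k - j₁, by omega⟩
  obtain ⟨m₂, hm₂⟩ : ∃ m, k = j₂ + m := ⟨k - j₂, by omega⟩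
  set V₁ := A₁ ∪ B₁ with hV₁
  set V₂ := A₂ ∪ B₂ with hV₂
  have hdisj : Disjoint V₁ V₂ := by
    rw [hV₁, hV₂, disjoint_union_left, disjoint_union_right, disjoint_union_right]
    refine ⟨⟨?_, ?_⟩, ?_, ?_⟩ <;> rw [disjoint_iff_inter_eq_empty]
    · exact hA₁A₂
    · exact hA₁B₂
    · rw [inter_comm]; exact hA₂B₁
    · exact hB₁B₂
  have hU : A₁ ∪ A₂ ∪ B₁ ∪ B₂ = V₁ ∪ V₂ := by
    rw [hV₁, hV₂]; ext x; simp; tauto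
  -- identify Nat.card with a filter card
  have hcard : Nat.card {S : Finset α // S ⊆ A₁ ∪ A₂ ∪ B₁ ∪ B₂ ∧
        (S ∩ A₁).Nonempty ∧ (S ∩ A₂).Nonempty ∧ (S ∩ B₁).Nonempty ∧ (S ∩ B₂).Nonempty}
      = ((V₁ ∪ V₂).powerset.filter
          (fun S => (((S ∩ V₁) ∩ A₁).Nonempty ∧ ((S ∩ V₁) ∩ B₁).Nonempty)
            ∧ (((S ∩ V₂) ∩ A₂).Nonempty ∧ ((S ∩ V₂) ∩ B₂).Nonempty))).card := by
    rw [← Nat.card_eq_finsetCard]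
    apply Nat.card_congr
    apply Equiv.subtypeEquivRight
    intro S
    have e : ∀ C W : Finset α, C ⊆ W → S ∩ W ∩ C = S ∩ C := by
      intro C W hCW
      rw [inter_assoc, inter_eq_right.2 hCW]
    simp only [mem_filter, mem_powerset, hU,
      e A₁ V₁ subset_union_left, e B₁ V₁ subset_union_right,
      e A₂ V₂ subset_union_left, e B₂ V₂ subset_union_right]
    tauto
  rw [hcard, card_filter_powerset_union V₁ V₂ hdisj
    (fun T => (T ∩ A₁).Nonempty ∧ (T ∩ B₁).Nonempty)
    (fun T => (T ∩ A₂).Nonempty ∧ (T ∩ B₂).Nonempty)]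
  -- cardinalities
  have cV₁ : V₁.card = j₁ + 2 * m₁ := by
    rw [hV₁]
    have := Finset.card_union_add_card_inter A₁ B₁
    omega
  have cV₂ : V₂.card = j₂ + 2 * m₂ := by
    rw [hV₂]
    have := Finset.card_union_add_card_inter A₂ B₂
    omega
  have cBA₁ : (B₁ \ A₁).card = m₁ := by
    have := Finset.card_sdiff_add_card_inter B₁ A₁
    rw [inter_comm] at this
    omega
  have cAB₁ : (A₁ \ B₁).card = m₁ := by
    have := Finset.card_sdiff_add_card_inter A₁ B₁
    omega
  have cBA₂ : (B₂ \ A₂).card = m₂ := by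
    have := Finset.card_sdiff_add_card_inter B₂ A₂
    rw [inter_comm] at this
    omega
  have cAB₂ : (A₂ \ B₂).card = m₂ := by
    have := Finset.card_sdiff_add_card_inter A₂ B₂
    omega
  have h1 := card_hit_two A₁ B₁
  have h2 := card_hit_two A₂ B₂
  rw [cBA₁, cAB₁, ← hV₁, cV₁] at h1
  rw [cBA₂, cAB₂, ← hV₂, cV₂] at h2
  have hUcard : (A₁ ∪ A₂ ∪ B₁ ∪ B₂).card = (j₁ + 2 * m₁) + (j₂ + 2 * m₂) := by
    rw [hU, card_union_of_disjoint hdisj, cV₁, cV₂]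
  rw [hUcard]
  -- real arithmetic
  have N1 : ((V₁.powerset.filter (fun S => (S ∩ A₁).Nonempty ∧ (S ∩ B₁).Nonempty)).card : ℝ)
      = 2 ^ (j₁ + 2 * m₁) + 1 - 2 * 2 ^ m₁ := by
    have := congrArg (fun n : ℕ => (n : ℝ)) h1
    push_cast at this
    linarith
  have N2 : ((V₂.powerset.filter (fun S => (S ∩ A₂).Nonempty ∧ (S ∩ B₂).Nonempty)).card : ℝ)
      = 2 ^ (j₂ + 2 * m₂) + 1 - 2 * 2 ^ m₂ := by
    have := congrArg (fun n : ℕ => (n : ℝ)) h2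
    push_cast at this
    linarith
  push_cast
  rw [N1, N2]
  -- rpow → nat pow
  have rp : ∀ n : ℕ, (2:ℝ) ^ (-(n:ℝ)) = ((2:ℝ) ^ n)⁻¹ := by
    intro n
    rw [Real.rpow_neg (by norm_num), Real.rpow_natCast]
  have em₁ : -((k:ℝ) - j₁) = -(m₁:ℝ) := by rw [hm₁]; push_cast; ring
  have em₂ : -((k:ℝ) - j₂) = -(m₂:ℝ) := by rw [hm₂]; push_cast; ring
  have ej : -((j₁:ℝ) + j₂) = -(((j₁ + j₂ : ℕ)):ℝ) := by push_cast; ring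
  rw [em₁, em₂, ej, rp, rp, rp, rp, rp]
  have pos : ∀ n : ℕ, (0:ℝ) < 2 ^ n := fun n => by positivity
  field_simp
  ring
end
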